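/- Let N ≥ 2, c > 0, b ∈ (0,1), and b₁ = (1−b)/N. Let A be the N×N real matrix whose first column is (b₁, …, b₁, b₁+b)ᵀ, with A_{i,i+1} = 1 for 1 ≤ i ≤ N−1 and all other entries 0, and let x*_n = (b + (N−n+1)(1−b)/N) · c / (Nb + (N+1)(1−b)/2). Then for every x ∈ ℝ^N with Σₙ xₙ = c, the iterates A^m x converge to x* as m → ∞. -/

import Mathlib

open Filter Finset

lemma colStoch_mul {n : ℕ} {M P : Matrix (Fin n) (Fin n) ℝ}
    (hM : ∀ j, ∑ i, M i j = 1) (hP : ∀ j, ∑ i, P i j = 1) (j : Fin n) :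
    ∑ i, (M * P) i j = 1 := by
  simp only [Matrix.mul_apply]
  rw [Finset.sum_comm]
  simp [← Finset.sum_mul, hM, hP]

lemma l1_bound {n : ℕ} {M : Matrix (Fin n) (Fin n) ℝ}
    (h0 : ∀ i j, 0 ≤ M i j) (h1 : ∀ j, ∑ i, M i j = 1) (v : Fin n → ℝ) :
    ∑ i, |M.mulVec v i| ≤ ∑ j, |v j| := by
  calc ∑ i, |M.mulVec v i| ≤ ∑ i, ∑ j, M i j * |v j| := by
        apply Finset.sum_le_sum; intro i _
        simp only [Matrix.mulVec, dotProduct]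
        calc |∑ j, M i j * v j| ≤ ∑ j, |M i j * v j| :=
              Finset.abs_sum_le_sum_abs _ _
        _ = ∑ j, M i j * |v j| := by
              apply Finset.sum_congr rfl; intro j _
              rw [abs_mul, abs_of_nonneg (h0 i j)]
  _ = ∑ j, |v j| := by
        rw [Finset.sum_comm]
        simp [← Finset.sum_mul, h1]

lemma dobrushin {n : ℕ} {M : Matrix (Fin n) (Fin n) ℝ} {δ : ℝ}
    (hδ : ∀ i j, δ ≤ M i j) (h1 : ∀ j, ∑ i, M i j = 1)
    (v : Fin n → ℝ) (hv : ∑ j, v j = 0) :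
    ∑ i, |M.mulVec v i| ≤ (1 - n * δ) * ∑ j, |v j| := by
  have key : ∀ i, M.mulVec v i = ∑ j, (M i j - δ) * v j := by
    intro i
    simp only [Matrix.mulVec, dotProduct, sub_mul, Finset.sum_sub_distrib,
      ← Finset.mul_sum, hv, mul_zero, sub_zero]
  calc ∑ i, |M.mulVec v i| ≤ ∑ i, ∑ j, (M i j - δ) * |v j| := by
        apply Finset.sum_le_sum; intro i _
        rw [key i]
        calc |∑ j, (M i j - δ) * v j| ≤ ∑ j, |(M i j - δ) * v j| :=
              Finset.abs_sum_le_sum_abs _ _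
        _ = ∑ j, (M i j - δ) * |v j| := by
              apply Finset.sum_congr rfl; intro j _
              rw [abs_mul, abs_of_nonneg (sub_nonneg.mpr (hδ i j))]
  _ = ∑ j, (1 - n * δ) * |v j| := by
        rw [Finset.sum_comm]
        apply Finset.sum_congr rfl; intro j _
        rw [← Finset.sum_mul, Finset.sum_sub_distrib, h1 j, Finset.sum_const,
          Finset.card_univ, Fintype.card_fin, nsmul_eq_mul]
  _ = (1 - n * δ) * ∑ j, |v j| := by rw [← Finset.mul_sum]

theorem aimd_global_convergence
    (N : ℕ) (hN : 2 ≤ N) (c b : ℝ) (hc : 0 < c) (hb : b ∈ Set.Ioo (0 : ℝ) 1)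
    (b₁ : ℝ) (hb₁ : b₁ = (1 - b) / N)
    (A : Matrix (Fin N) (Fin N) ℝ)
    (hA : ∀ i j : Fin N, A i j =
      if (j : ℕ) = 0 then (if (i : ℕ) = N - 1 then b₁ + b else b₁)
      else if (j : ℕ) = (i : ℕ) + 1 then 1 else 0)
    (xstar : Fin N → ℝ)
    (hxstar : ∀ i : Fin N, xstar i =
      (b + ((N : ℝ) - (i : ℕ)) * (1 - b) / N) * c
        / ((N : ℝ) * b + ((N : ℝ) + 1) * (1 - b) / 2))
    (x : Fin N → ℝ) (hsum : ∑ i, x i = c) :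
    Filter.Tendsto (fun m : ℕ => (A ^ m).mulVec x) Filter.atTop (nhds xstar) := by
  have hN0 : 0 < N := by omega
  obtain ⟨hb0, hb1'⟩ := hb
  have hNR : (0:ℝ) < N := by exact_mod_cast hN0
  have hb₁pos : 0 < b₁ := by rw [hb₁]; exact div_pos (by linarith) hNR
  set z0 : Fin N := ⟨0, hN0⟩ with hz0
  have hcol0 : ∀ i : Fin N, A i z0 = if (i:ℕ) = N - 1 then b₁ + b else b₁ := by
    intro i; rw [hA]; simp [z0]
  have hApos0 : ∀ i : Fin N, 0 < A i z0 := by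
    intro i; rw [hcol0]; split <;> linarith
  have hAnn : ∀ i j : Fin N, 0 ≤ A i j := by
    intro i j; rw [hA]
    split
    · split <;> linarith
    · split <;> norm_num
  have hmul : ∀ (v : Fin N → ℝ) (i : Fin N), A.mulVec v i =
      A i z0 * v z0 + (if h : (i:ℕ)+1 < N then v ⟨(i:ℕ)+1, h⟩ else 0) := by
    intro v i
    simp only [Matrix.mulVec, dotProduct]
    by_cases h : (i:ℕ)+1 < N
    · rw [dif_pos h]
      set i1 : Fin N := ⟨(i:ℕ)+1, h⟩ with hi1
      have hz0i1 : z0 ≠ i1 := by simp [Fin.ext_iff, z0, i1]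
      have hptw : ∀ j : Fin N, A i j * v j =
          (if j = z0 then A i z0 * v z0 else 0) + (if j = i1 then v i1 else 0) := by
        intro j
        rcases eq_or_ne j z0 with rfl | hj0
        · simp [hz0i1]
        · rcases eq_or_ne j i1 with rfl | hj1
          · have h1 : ¬ ((i1:ℕ) = 0) := by simp [i1]
            rw [hA, if_neg h1, if_pos (by simp [i1])]
            simp [hj0]
          · have h1 : ¬ ((j:ℕ) = 0) := fun hh => hj0 (Fin.ext_iff.mpr hh)
            have h2 : ¬ ((j:ℕ) = (i:ℕ)+1) := fun hh => hj1 (Fin.ext_iff.mpr hh)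
            rw [hA, if_neg h1, if_neg h2]
            simp [hj0, hj1]
      rw [Finset.sum_congr rfl (fun j _ => hptw j), Finset.sum_add_distrib,
        Finset.sum_ite_eq', Finset.sum_ite_eq']
      simp
    · rw [dif_neg h, add_zero]
      have hptw : ∀ j : Fin N, A i j * v j = (if j = z0 then A i z0 * v z0 else 0) := by
        intro j
        rcases eq_or_ne j z0 with rfl | hj0
        · simp
        · have h1 : ¬ ((j:ℕ) = 0) := fun hh => hj0 (Fin.ext_iff.mpr hh)
          have h2 : ¬ ((j:ℕ) = (i:ℕ)+1) := by have := j.isLt; omega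
          rw [hA, if_neg h1, if_neg h2]
          simp [hj0]
      rw [Finset.sum_congr rfl (fun j _ => hptw j), Finset.sum_ite_eq']
      simp
  have hAcol : ∀ j : Fin N, ∑ i, A i j = 1 := by
    intro j
    rcases eq_or_ne j z0 with rfl | hj0
    · have key : ∀ i : Fin N, A i z0 = b₁ + (if i = (⟨N-1, by omega⟩ : Fin N) then b else 0) := by
        intro i; rw [hcol0]
        by_cases h : (i:ℕ) = N-1
        · rw [if_pos h, if_pos (by simp [Fin.ext_iff, h])]
        · rw [if_neg h, if_neg (by simp [Fin.ext_iff]; omega), add_zero]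
      rw [Finset.sum_congr rfl fun i _ => key i, Finset.sum_add_distrib,
        Finset.sum_const, Finset.sum_ite_eq', Finset.card_univ, Fintype.card_fin,
        nsmul_eq_mul, if_pos (Finset.mem_univ _), hb₁]
      field_simp
      ring
    · have hj1 : 1 ≤ (j:ℕ) := by
        by_contra h
        exact hj0 (Fin.ext_iff.mpr (show (j:ℕ) = 0 by omega))
      have key : ∀ i : Fin N, A i j = if i = (⟨(j:ℕ)-1, by omega⟩ : Fin N) then 1 else 0 := by
        intro i; rw [hA, if_neg (by omega)]
        by_cases h : i = (⟨(j:ℕ)-1, by omega⟩ : Fin N)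
        · rw [if_pos h, if_pos]
          rw [h]; simp; omega
        · rw [if_neg h, if_neg]
          have h' : (i:ℕ) ≠ (j:ℕ)-1 := fun hh => h (Fin.ext_iff.mpr hh)
          omega
      rw [Finset.sum_congr rfl fun i _ => key i, Finset.sum_ite_eq',
        if_pos (Finset.mem_univ _)]
  have hsum_pres : ∀ v : Fin N → ℝ, ∑ i, A.mulVec v i = ∑ i, v i := by
    intro v
    simp only [Matrix.mulVec, dotProduct]
    rw [Finset.sum_comm]
    simp [← Finset.sum_mul, hAcol]
  have hpow_col : ∀ m : ℕ, ∀ j : Fin N, ∑ i, (A^m) i j = 1 := by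
    intro m
    induction m with
    | zero => intro j; simp [Matrix.one_apply, Finset.sum_ite_eq']
    | succ m ih => intro j; rw [pow_succ]; exact colStoch_mul ih hAcol j
  have hpow_nn : ∀ m : ℕ, ∀ i j : Fin N, 0 ≤ (A^m) i j := by
    intro m
    induction m with
    | zero =>
      intro i j
      rw [pow_zero, Matrix.one_apply]
      split <;> norm_num
    | succ m ih =>
      intro i j
      rw [pow_succ, Matrix.mul_apply]
      exact Finset.sum_nonneg fun k _ => mul_nonneg (ih i k) (hAnn k j)
  have hAposv : ∀ v : Fin N → ℝ, (∀ k, 0 ≤ v k) → 0 < v z0 → ∀ i, 0 < A.mulVec v i := by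
    intro v hv h0 i
    rw [hmul]
    have hpos : 0 < A i z0 * v z0 := mul_pos (hApos0 i) h0
    split
    · exact add_pos_of_pos_of_nonneg hpos (hv _)
    · linarith
  have hposN : ∀ m : ℕ, 1 ≤ m → ∀ j : Fin N, (j:ℕ) < m → ∀ i, 0 < (A^m) i j := by
    intro m
    induction m with
    | zero => omega
    | succ m ih =>
      intro _ j hj i
      rcases eq_or_ne (j:ℕ) 0 with hj0 | hj0
      · rcases Nat.eq_zero_or_pos m with rfl | hm
        · have hjz : j = z0 := Fin.ext_iff.mpr hj0
          rw [pow_one, hjz]; exact hApos0 i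
        · have hcolpos : ∀ k, 0 < (A^m) k j := fun k => ih hm j (by omega) k
          have hrw : (A^(m+1)) i j = A.mulVec (fun k => (A^m) k j) i := by
            rw [pow_succ', Matrix.mul_apply]
            simp [Matrix.mulVec, dotProduct]
          rw [hrw]
          exact hAposv _ (fun k => le_of_lt (hcolpos k)) (hcolpos z0) i
      · have hjlt : (j:ℕ) - 1 < m := by omega
        have hm1 : 1 ≤ m := by omega
        set jp : Fin N := ⟨(j:ℕ)-1, by omega⟩ with hjp
        have hstep : (A^(m+1)) i j = (A^m) i jp := by
          rw [pow_succ, Matrix.mul_apply]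
          have key : ∀ k : Fin N, (A^m) i k * A k j = if k = jp then (A^m) i jp else 0 := by
            intro k
            rw [hA, if_neg hj0]
            by_cases h : k = jp
            · rw [if_pos (by rw [h]; simp [jp]; omega), if_pos h, h, mul_one]
            · rw [if_neg ?_, if_neg h, mul_zero]
              have h' : (k:ℕ) ≠ (j:ℕ)-1 := fun hh => h (Fin.ext_iff.mpr hh)
              omega
          rw [Finset.sum_congr rfl fun k _ => key k, Finset.sum_ite_eq',
            if_pos (Finset.mem_univ _)]
        rw [hstep]
        exact ih hm1 jp (by simpa [jp] using hjlt) i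
  set D : ℝ := (N:ℝ) * b + ((N:ℝ) + 1) * (1 - b) / 2 with hD
  have hDpos : 0 < D := by
    have h1 : 0 < (N:ℝ) * b := mul_pos hNR hb0
    have h2 : 0 < ((N:ℝ) + 1) * (1 - b) / 2 :=
      div_pos (mul_pos (by linarith) (by linarith)) two_pos
    rw [hD]; linarith
  have hfix : A.mulVec xstar = xstar := by
    funext i
    rw [hmul, hxstar i, hxstar z0]
    have hz0c : (((z0 : Fin N) : ℕ) : ℝ) = 0 := by norm_num [z0]
    rw [hz0c]
    by_cases h : (i:ℕ)+1 < N
    · rw [dif_pos h, hxstar ⟨(i:ℕ)+1, h⟩]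
      have hiv : ((((⟨(i:ℕ)+1, h⟩ : Fin N)) : ℕ) : ℝ) = ((i:ℕ):ℝ) + 1 := by norm_cast
      rw [hiv, hcol0, if_neg (by omega), hb₁]
      field_simp
      ring
    · rw [dif_neg h, add_zero, hcol0, if_pos (by have := i.isLt; omega)]
      have hiv : (((i : Fin N) : ℕ) : ℝ) = (N:ℝ) - 1 := by
        have h2 : (i:ℕ) = N - 1 := by have := i.isLt; omega
        rw [h2, Nat.cast_sub (by omega : 1 ≤ N)]
        norm_num
      rw [hiv, hb₁]
      field_simp
      ring
  have hgauss : ∑ i : Fin N, ((i:ℕ):ℝ) = (N:ℝ) * ((N:ℝ) - 1) / 2 := by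
    have h0 := Finset.sum_range_id_mul_two N
    have h2 : (((∑ i ∈ Finset.range N, i) * 2 : ℕ) : ℝ) = ((N * (N-1) : ℕ) : ℝ) := by
      exact_mod_cast congrArg (Nat.cast : ℕ → ℝ) h0
    push_cast [Nat.cast_sub (by omega : 1 ≤ N)] at h2
    rw [Fin.sum_univ_eq_sum_range (fun i => ((i:ℕ):ℝ)) N]
    linarith
  have hxsum : ∑ i, xstar i = c := by
    rw [Finset.sum_congr rfl fun i _ => hxstar i, ← Finset.sum_div, ← Finset.sum_mul]
    have hsplit : (∑ i : Fin N, (b + ((N:ℝ) - (i:ℕ)) * (1 - b) / N)) = D := by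
      rw [Finset.sum_add_distrib, Finset.sum_const, Finset.card_univ, Fintype.card_fin,
        ← Finset.sum_div, ← Finset.sum_mul, Finset.sum_sub_distrib, Finset.sum_const,
        Finset.card_univ, Fintype.card_fin, hgauss, nsmul_eq_mul, nsmul_eq_mul, hD]
      field_simp
      ring
    rw [hsplit, mul_comm, mul_div_assoc, div_self hDpos.ne', mul_one]
  have hfixpow : ∀ m : ℕ, (A^m).mulVec xstar = xstar := by
    intro m
    induction m with
    | zero => simp
    | succ m ih => rw [pow_succ', ← Matrix.mulVec_mulVec, ih, hfix]
  have hBpos : ∀ i j : Fin N, 0 < (A^N) i j := fun i j => hposN N (by omega) j j.isLt i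
  obtain ⟨p, -, hp⟩ := Finset.exists_min_image (Finset.univ : Finset (Fin N × Fin N))
      (fun q => (A^N) q.1 q.2) ⟨(z0, z0), Finset.mem_univ _⟩
  set δ : ℝ := (A^N) p.1 p.2 with hδdef
  have hδpos : 0 < δ := hBpos p.1 p.2
  have hδle : ∀ i j, δ ≤ (A^N) i j := fun i j => hp (i,j) (Finset.mem_univ _)
  set γ : ℝ := 1 - (N:ℝ) * δ with hγdef
  have hγ0 : 0 ≤ γ := by
    have h1 : (N:ℝ) * δ = ∑ _i : Fin N, δ := by
      rw [Finset.sum_const, Finset.card_univ, Fintype.card_fin, nsmul_eq_mul]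
    have h2 : (∑ _i : Fin N, δ) ≤ ∑ i, (A^N) i z0 := Finset.sum_le_sum fun i _ => hδle i z0
    rw [hpow_col N z0] at h2
    rw [hγdef, h1]
    linarith
  have hγ1 : γ < 1 := by rw [hγdef]; nlinarith [hδpos, hNR]
  set e : Fin N → ℝ := x - xstar with he
  have hesum : ∑ i, e i = 0 := by
    rw [he]
    simp only [Pi.sub_apply, Finset.sum_sub_distrib, hsum, hxsum, sub_self]
  have hzsum : ∀ m, ∑ i, (A^m).mulVec e i = 0 := by
    intro m
    induction m with
    | zero => simpa using hesum
    | succ m ih =>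
      rw [pow_succ', ← Matrix.mulVec_mulVec, hsum_pres]
      exact ih
  set S : ℕ → ℝ := fun m => ∑ i, |(A^m).mulVec e i| with hSdef
  have hS0 : ∀ m, 0 ≤ S m := fun m => Finset.sum_nonneg fun i _ => abs_nonneg _
  have hmono : ∀ k m : ℕ, S (m + k) ≤ S m := by
    intro k
    induction k with
    | zero => intro m; simp
    | succ k ih =>
      intro m
      have heq : (A^(m + (k+1))).mulVec e = A.mulVec ((A^(m+k)).mulVec e) := by
        rw [Matrix.mulVec_mulVec, ← pow_succ', Nat.add_succ]
      calc S (m + (k+1)) = ∑ i, |A.mulVec ((A^(m+k)).mulVec e) i| := by rw [hSdef]; simp only [heq]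
      _ ≤ ∑ i, |(A^(m+k)).mulVec e i| := l1_bound hAnn hAcol _
      _ ≤ S m := ih m
  have hstep : ∀ m, S (m + N) ≤ γ * S m := by
    intro m
    have h1 : (A^(m+N)).mulVec e = (A^N).mulVec ((A^m).mulVec e) := by
      rw [add_comm m N, pow_add, Matrix.mulVec_mulVec]
    calc S (m + N) = ∑ i, |(A^N).mulVec ((A^m).mulVec e) i| := by rw [hSdef]; simp only [h1]
    _ ≤ (1 - (N:ℝ) * δ) * ∑ j, |(A^m).mulVec e j| := dobrushin hδle (hpow_col N) _ (hzsum m)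
    _ = γ * S m := by rw [hγdef, hSdef]
  have hgeom : ∀ m, S m ≤ γ^(m / N) * S 0 := by
    intro m
    induction m using Nat.strong_induction_on with
    | _ m ih =>
      by_cases h : m < N
      · rw [Nat.div_eq_of_lt h, pow_zero, one_mul]
        simpa using hmono m 0
      · push_neg at h
        have h1 : m = (m - N) + N := by omega
        have h2 : S m ≤ γ * S (m - N) := by
          conv_lhs => rw [h1]
          exact hstep (m - N)
        have h3 : S (m - N) ≤ γ^((m-N)/N) * S 0 := ih (m - N) (by omega)
        have h4 : m / N = (m - N)/N + 1 := by
          conv_lhs => rw [h1]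
          rw [Nat.add_div_right _ hN0]
        rw [h4, pow_succ]
        calc S m ≤ γ * S (m - N) := h2
        _ ≤ γ * (γ^((m-N)/N) * S 0) := mul_le_mul_of_nonneg_left h3 hγ0
        _ = γ^((m-N)/N) * γ * S 0 := by ring
  have hdiv : Filter.Tendsto (fun m : ℕ => m / N) Filter.atTop Filter.atTop :=
    Filter.tendsto_atTop_atTop.mpr fun q => ⟨q * N, fun m hm => (Nat.le_div_iff_mul_le hN0).mpr hm⟩
  have hγtend : Filter.Tendsto (fun m : ℕ => γ^(m/N) * S 0) Filter.atTop (nhds 0) := by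
    have h5 := ((tendsto_pow_atTop_nhds_zero_of_lt_one hγ0 hγ1).comp hdiv).mul_const (S 0)
    simpa using h5
  have hStend : Filter.Tendsto S Filter.atTop (nhds 0) := squeeze_zero hS0 hgeom hγtend
  rw [tendsto_pi_nhds]
  intro i
  have hcoord : Filter.Tendsto (fun m => (A^m).mulVec e i) Filter.atTop (nhds 0) := by
    apply squeeze_zero_norm (fun m => ?_) hStend
    rw [Real.norm_eq_abs]
    show _ ≤ ∑ j, |(A^m).mulVec e j|
    exact Finset.single_le_sum (fun j _ => abs_nonneg ((A^m).mulVec e j)) (Finset.mem_univ i)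
  have hdecomp : ∀ m : ℕ, (A^m).mulVec x i = (A^m).mulVec e i + xstar i := by
    intro m
    rw [he, Matrix.mulVec_sub, hfixpow m]
    simp
  simp only [hdecomp]
  simpa using hcoord.add tendsto_const_nhds
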